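/- If y : [0,∞) → [0,∞) satisfies y′(t) + c y(t) ≤ A (1+t)^{−5/2} (1 + δ M) for all t ≥ 0, where c, A, δ, M ≥ 0 are constants with c > 0, then y(t) ≤ y(0) e^{−ct} + C A (1+δM)(1+t)^{−5/2} for all t ≥ 0, for some constant C depending only on c. -/

import Mathlib

set_option maxHeartbeats 1000000 in
/-- Gronwall-type decay with forcing (1+t)^{-5/2}(1+δM): the constant C depends only on c. -/
theorem gronwall_decay_five_halves :
    ∀ c : ℝ, 0 < c → ∃ C : ℝ, 0 < C ∧
      ∀ (y y' : ℝ → ℝ) (A δ M : ℝ), 0 ≤ A → 0 ≤ δ → 0 ≤ M →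
        (∀ t, 0 ≤ t → 0 ≤ y t) →
        (∀ t, 0 ≤ t → HasDerivAt y (y' t) t) →
        ContinuousOn y' (Set.Ici 0) →
        (∀ t, 0 ≤ t → y' t + c * y t ≤ A * (1 + t) ^ (-(5:ℝ)/2) * (1 + δ * M)) →
        ∀ t, 0 ≤ t →
          y t ≤ y 0 * Real.exp (-c * t) + C * A * (1 + δ * M) * (1 + t) ^ (-(5:ℝ)/2) := by
  intro c hc
  set K : ℝ := 2 / c with hKdef
  set L : ℝ := (2 / c) * (1 + 5 * K / 2) * Real.exp (5 / 2) with hLdef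
  set E : ℝ := 216 / c ^ 3 * Real.exp (c / 2) with hEdef
  have hKpos : 0 < K := by positivity
  have hLpos : 0 < L := by positivity
  have hEpos : 0 < E := by positivity
  refine ⟨K + L * E, by positivity, ?_⟩
  intro y y' A δ M hA hδ hM hy0 hyd hy'c hineq
  set B : ℝ := 1 + δ * M with hBdef
  have hB1 : (1:ℝ) ≤ B := by nlinarith
  have hB0 : (0:ℝ) ≤ B := by linarith
  have hAB : (0:ℝ) ≤ A * B := mul_nonneg hA hB0
  -- key scalar inequality
  have hkey : ∀ s : ℝ, 0 ≤ s →
      (1+s) ^ (-(5:ℝ)/2) ≤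
        K * (c * (1+s) ^ (-(5:ℝ)/2) + (-(5:ℝ)/2) * (1+s) ^ (-(7:ℝ)/2))
          + L * (c/2) * Real.exp (-(c/2) * s) := by
    intro s hs
    have h1 : (0:ℝ) < 1 + s := by linarith
    have hφpos : (0:ℝ) < (1+s) ^ (-(5:ℝ)/2) := Real.rpow_pos_of_pos h1 _
    have hψpos : (0:ℝ) < (1+s) ^ (-(7:ℝ)/2) := Real.rpow_pos_of_pos h1 _
    have hφ1 : (1+s) ^ (-(5:ℝ)/2) ≤ 1 :=
      Real.rpow_le_one_of_one_le_of_nonpos (by linarith) (by norm_num)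
    have hψ1 : (1+s) ^ (-(7:ℝ)/2) ≤ 1 :=
      Real.rpow_le_one_of_one_le_of_nonpos (by linarith) (by norm_num)
    have hψφ : (1+s) ^ (-(7:ℝ)/2) * (1+s) = (1+s) ^ (-(5:ℝ)/2) := by
      have h := Real.rpow_add h1 (-(7:ℝ)/2) 1
      rw [Real.rpow_one] at h
      rw [← h]; norm_num
    have hKc : K * c = 2 := by rw [hKdef]; field_simp
    rcases le_or_gt (5 / c) s with hcase | hcase
    · -- large time: K term dominates
      have h5 : 5 ≤ c * (1 + s) := by
        have : 5 / c ≤ s := hcase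
        have := (div_le_iff₀ hc).mp this
        nlinarith
      have hexp0 : (0:ℝ) ≤ L * (c/2) * Real.exp (-(c/2) * s) := by positivity
      -- c * φ ≥ 5 * ψ since φ = ψ * (1+s) and c(1+s) ≥ 5
      have h6 : 5 * (1+s) ^ (-(7:ℝ)/2) ≤ c * (1+s) ^ (-(5:ℝ)/2) := by
        rw [← hψφ]; nlinarith
      have h7 : K * c * ((1+s) ^ (-(5:ℝ)/2)) = 2 * ((1+s) ^ (-(5:ℝ)/2)) := by
        rw [show K * c * ((1+s) ^ (-(5:ℝ)/2)) = (K*c) * ((1+s) ^ (-(5:ℝ)/2)) by ring, hKc]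
      have h8 := mul_le_mul_of_nonneg_left h6 hKpos.le
      nlinarith [h7, h8, hexp0]
    · -- small time: L term dominates
      have hexple : Real.exp (-(5:ℝ)/2) ≤ Real.exp (-(c/2) * s) := by
        apply Real.exp_le_exp.2
        have : c * s ≤ 5 := by nlinarith [(lt_div_iff₀ hc).mp hcase]
        nlinarith
      have hLval : L * (c/2) * Real.exp (-(5:ℝ)/2) = 1 + 5 * K / 2 := by
        have h2c : 2 / c * (c / 2) = 1 := by field_simp
        have hee : Real.exp ((5:ℝ)/2) * Real.exp (-(5:ℝ)/2) = 1 := by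
          rw [← Real.exp_add]; norm_num
        rw [hLdef, show (2 / c) * (1 + 5 * K / 2) * Real.exp (5 / 2) * (c/2) * Real.exp (-(5:ℝ)/2)
            = (1 + 5 * K / 2) * (2 / c * (c / 2)) * (Real.exp ((5:ℝ)/2) * Real.exp (-(5:ℝ)/2)) by ring,
          h2c, hee]
        ring
      have hmul : L * (c/2) * Real.exp (-(5:ℝ)/2) ≤ L * (c/2) * Real.exp (-(c/2) * s) := by
        apply mul_le_mul_of_nonneg_left hexple
        positivity
      have t1 : 0 ≤ K * c * ((1+s) ^ (-(5:ℝ)/2)) := by positivity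
      have t2 := mul_le_mul_of_nonneg_left hψ1 hKpos.le
      rw [mul_one] at t2
      have t3 : 1 + 5 * K / 2 ≤ L * (c/2) * Real.exp (-(c/2) * s) := hLval ▸ hmul
      nlinarith [t1, t2, t3, hφ1]
  -- exponential dominated by power decay
  have hexpbound : ∀ s : ℝ, 0 ≤ s →
      Real.exp (-(c/2) * s) ≤ E * (1+s) ^ (-(5:ℝ)/2) := by
    intro s hs
    have h1 : (0:ℝ) < 1 + s := by linarith
    set x : ℝ := (c/2) * (1+s) with hxdef
    have hx0 : 0 < x := by positivity
    have h3 : (1 + x/3) ^ 3 ≤ Real.exp x := by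
      have h := Real.add_one_le_exp (x/3)
      have hp : (1 + x/3) ^ 3 ≤ (Real.exp (x/3)) ^ 3 := by
        apply pow_le_pow_left₀ (by positivity) (by linarith)
      calc (1 + x/3) ^ 3 ≤ (Real.exp (x/3)) ^ 3 := hp
        _ = Real.exp (3 * (x/3)) := (Real.exp_nat_mul _ 3).symm
        _ = Real.exp x := by congr 1; push_cast; ring
    have hpow : (1+s) ^ ((5:ℝ)/2) ≤ (1+s) ^ (3:ℕ) := by
      rw [← Real.rpow_natCast (1+s) 3]
      apply Real.rpow_le_rpow_of_exponent_le (by linarith)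
      norm_num
    have h4 : c ^ 3 / 216 * (1+s) ^ ((5:ℝ)/2) ≤ Real.exp x := by
      have hc3 : c ^ 3 / 216 * (1+s) ^ (3:ℕ) = (x/3) ^ 3 := by
        rw [hxdef]; ring
      have h5 : c ^ 3 / 216 * (1+s) ^ ((5:ℝ)/2) ≤ c ^ 3 / 216 * (1+s) ^ (3:ℕ) := by
        apply mul_le_mul_of_nonneg_left hpow (by positivity)
      have h6 : (x/3) ^ 3 ≤ (1 + x/3) ^ 3 := by
        apply pow_le_pow_left₀ (by positivity) (by linarith)
      calc c ^ 3 / 216 * (1+s) ^ ((5:ℝ)/2) ≤ (x/3) ^ 3 := by rw [← hc3]; exact h5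
        _ ≤ (1 + x/3) ^ 3 := h6
        _ ≤ Real.exp x := h3
    have hprod : Real.exp (-(c/2) * s) * Real.exp x = Real.exp (c/2) := by
      rw [← Real.exp_add, hxdef]; ring_nf
    have hP : (0:ℝ) < (1+s) ^ ((5:ℝ)/2) := Real.rpow_pos_of_pos h1 _
    have hneg : (1+s) ^ (-(5:ℝ)/2) = ((1+s) ^ ((5:ℝ)/2))⁻¹ := by
      rw [show (-(5:ℝ)/2) = -((5:ℝ)/2) by ring, Real.rpow_neg h1.le]
    have key : Real.exp (-(c/2) * s) * (1+s) ^ ((5:ℝ)/2) ≤ E := by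
      have h7 : Real.exp (-(c/2) * s) * (c ^ 3 / 216 * (1+s) ^ ((5:ℝ)/2))
          ≤ Real.exp (-(c/2) * s) * Real.exp x :=
        mul_le_mul_of_nonneg_left h4 (Real.exp_pos _).le
      rw [hprod] at h7
      rw [show Real.exp (-(c/2) * s) * (c ^ 3 / 216 * (1+s) ^ ((5:ℝ)/2))
          = c ^ 3 / 216 * (Real.exp (-(c/2) * s) * (1+s) ^ ((5:ℝ)/2)) by ring] at h7
      have h8 := mul_le_mul_of_nonneg_left h7 (by positivity : (0:ℝ) ≤ 216 / c ^ 3)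
      calc Real.exp (-(c/2) * s) * (1+s) ^ ((5:ℝ)/2)
          = 216 / c ^ 3 * (c ^ 3 / 216 * (Real.exp (-(c/2) * s) * (1+s) ^ ((5:ℝ)/2))) := by
            field_simp
        _ ≤ 216 / c ^ 3 * Real.exp (c/2) := h8
        _ = E := by rw [hEdef]
    rw [hneg, ← div_eq_mul_inv]
    rw [le_div_iff₀ hP]
    exact key
  intro t ht
  -- barrier function
  set w : ℝ → ℝ := fun s => y 0 * Real.exp (-c * s)
    + A * B * (K * (1+s) ^ (-(5:ℝ)/2) + L * Real.exp (-(c/2) * s)) with hwdef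
  set w' : ℝ → ℝ := fun s => y 0 * (Real.exp (-c * s) * (-c))
    + A * B * (K * ((-(5:ℝ)/2) * (1+s) ^ (-(7:ℝ)/2)) + L * (Real.exp (-(c/2) * s) * (-(c/2)))) with hw'def
  have hwd : ∀ s : ℝ, 0 ≤ s → HasDerivAt w (w' s) s := by
    intro s hs
    have h1 : (0:ℝ) < 1 + s := by linarith
    have e1 : HasDerivAt (fun u : ℝ => -c * u) (-c) s := by
      simpa using (hasDerivAt_id s).const_mul (-c)
    have e2 : HasDerivAt (fun u : ℝ => Real.exp (-c * u)) (Real.exp (-c * s) * (-c)) s := e1.exp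
    have e3 : HasDerivAt (fun u : ℝ => -(c/2) * u) (-(c/2)) s := by
      simpa using (hasDerivAt_id s).const_mul (-(c/2))
    have e4 : HasDerivAt (fun u : ℝ => Real.exp (-(c/2) * u)) (Real.exp (-(c/2) * s) * (-(c/2))) s := e3.exp
    have e5 : HasDerivAt (fun u : ℝ => 1 + u) 1 s := by
      simpa using (hasDerivAt_id s).const_add 1
    have e6 : HasDerivAt (fun u : ℝ => (1+u) ^ (-(5:ℝ)/2)) ((-(5:ℝ)/2) * (1+s) ^ (-(7:ℝ)/2)) s := by
      have hr := Real.hasDerivAt_rpow_const (x := 1+s) (p := -(5:ℝ)/2) (Or.inl h1.ne')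
      have h75 : (-(5:ℝ)/2 - 1 : ℝ) = -(7:ℝ)/2 := by norm_num
      have hc' := hr.comp s e5
      rw [h75, mul_one] at hc'
      exact hc'
    have := ((e2.const_mul (y 0)).add
      (((e6.const_mul K).add (e4.const_mul L)).const_mul (A * B)))
    exact this
  have hforce : ∀ s : ℝ, 0 ≤ s → y' s + c * y s ≤ w' s + c * w s := by
    intro s hs
    have h2 := hkey s hs
    have h3 := hineq s hs
    have hmul := mul_le_mul_of_nonneg_left h2 hAB
    have heq : w' s + c * w s
        = A * B * (K * (c * (1+s) ^ (-(5:ℝ)/2) + (-(5:ℝ)/2) * (1+s) ^ (-(7:ℝ)/2))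
          + L * (c/2) * Real.exp (-(c/2) * s)) := by
      simp only [hwdef, hw'def]; ring
    calc y' s + c * y s ≤ A * (1+s) ^ (-(5:ℝ)/2) * B := h3
      _ = A * B * ((1+s) ^ (-(5:ℝ)/2)) := by ring
      _ ≤ A * B * (K * (c * (1+s) ^ (-(5:ℝ)/2) + (-(5:ℝ)/2) * (1+s) ^ (-(7:ℝ)/2))
          + L * (c/2) * Real.exp (-(c/2) * s)) := hmul
      _ = w' s + c * w s := heq.symm
  set u : ℝ → ℝ := fun s => (y s - w s) * Real.exp (c * s) with hudef
  have hud : ∀ s : ℝ, 0 ≤ s → HasDerivAt u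
      ((y' s - w' s) * Real.exp (c * s) + (y s - w s) * (Real.exp (c * s) * c)) s := by
    intro s hs
    have ec : HasDerivAt (fun u : ℝ => Real.exp (c * u)) (Real.exp (c * s) * c) s := by
      have : HasDerivAt (fun u : ℝ => c * u) c s := by
        simpa using (hasDerivAt_id s).const_mul c
      exact this.exp
    exact ((hyd s hs).sub (hwd s hs)).mul ec
  have hnonpos : ∀ s : ℝ, 0 ≤ s →
      (y' s - w' s) * Real.exp (c * s) + (y s - w s) * (Real.exp (c * s) * c) ≤ 0 := by
    intro s hs
    have hd : (y' s - w' s) + c * (y s - w s) ≤ 0 := by linarith [hforce s hs]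
    have hp := mul_nonpos_of_nonpos_of_nonneg hd (Real.exp_pos (c * s)).le
    calc (y' s - w' s) * Real.exp (c * s) + (y s - w s) * (Real.exp (c * s) * c)
        = ((y' s - w' s) + c * (y s - w s)) * Real.exp (c * s) := by ring
      _ ≤ 0 := hp
  have hcont : ContinuousOn u (Set.Ici 0) := fun s hs =>
    ((hud s hs).continuousAt).continuousWithinAt
  have hanti : AntitoneOn u (Set.Ici 0) := by
    apply antitoneOn_of_deriv_nonpos (convex_Ici 0) hcont
    · intro x hx
      rw [interior_Ici] at hx
      exact ((hud x hx.le).differentiableAt).differentiableWithinAt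
    · intro x hx
      rw [interior_Ici] at hx
      rw [(hud x hx.le).deriv]
      exact hnonpos x hx.le
  have hu0 : u t ≤ u 0 := hanti Set.self_mem_Ici ht ht
  have hu0val : u 0 ≤ 0 := by
    have hw0 : w 0 = y 0 + A * B * (K + L) := by
      simp only [hwdef]
      rw [show (1:ℝ) + 0 = 1 by norm_num, Real.one_rpow]
      rw [show -c * 0 = (0:ℝ) by ring, show -(c/2) * 0 = (0:ℝ) by ring, Real.exp_zero]
      ring
    have : u 0 = (y 0 - w 0) * Real.exp 0 := by simp only [hudef]; norm_num
    rw [this, hw0, Real.exp_zero]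
    nlinarith [mul_nonneg hAB (by positivity : (0:ℝ) ≤ K + L)]
  have hyw : y t ≤ w t := by
    have h := le_trans hu0 hu0val
    simp only [hudef] at h
    nlinarith [Real.exp_pos (c * t)]
  have hfin : w t ≤ y 0 * Real.exp (-c * t) + (K + L * E) * A * B * ((1+t) ^ (-(5:ℝ)/2)) := by
    have hb := hexpbound t ht
    have := mul_le_mul_of_nonneg_left hb (by positivity : (0:ℝ) ≤ A * B * L)
    simp only [hwdef]
    nlinarith
  calc y t ≤ w t := hyw
    _ ≤ y 0 * Real.exp (-c * t) + (K + L * E) * A * B * ((1+t) ^ (-(5:ℝ)/2)) := hfin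
    _ = y 0 * Real.exp (-c * t) + (K + L * E) * A * (1 + δ * M) * (1+t) ^ (-(5:ℝ)/2) := by
      rw [hBdef]
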